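/- arXiv:1401.2249 — 3 statements merged into one kernel-verified Lean document; each statement's English description precedes it below -/
import Mathlib

section
/- Let K ⊆ ℂ^n be a compact set, let P : ℂ^n → ℂ^k be a polynomial map, and let F = P|_K. Assume that [w_1,…,w_k]_{F(K)} = C(F(K),ℂ), where w_1,…,w_k are the coordinate functions on ℂ^k, and that [z_1,…,z_n]_{K ∩ P^{-1}(w)} = C(K ∩ P^{-1}(w), ℂ) for every w ∈ ℂ^k. Then [z_1,…,z_n]_K = C(K,ℂ). -/
noncomputable def genAlg {X : Type*} [TopologicalSpace X] (S : Set C(X, ℂ)) : Set C(X, ℂ) :=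
  closure ((Algebra.adjoin ℂ S : Subalgebra ℂ C(X, ℂ)) : Set C(X, ℂ))

/-- Generators of the algebra `[z₁,…,z_m]_M`: the coordinate functions. -/
def coordGens {m : ℕ} (M : Set (Fin m → ℂ)) : Set C(M, ℂ) :=
  {g | ∃ i : Fin m, ∀ z : M, g z = (z : Fin m → ℂ) i}

/-- Evaluation of polynomials as an algebra hom into continuous functions on `M`. -/
noncomputable def evalHom {m : ℕ} (M : Set (Fin m → ℂ)) :
    MvPolynomial (Fin m) ℂ →ₐ[ℂ] C(M, ℂ) :=
  MvPolynomial.aeval fun i =>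
    ⟨fun z => (z : Fin m → ℂ) i, (continuous_apply i).comp continuous_subtype_val⟩

lemma evalHom_apply {m : ℕ} (M : Set (Fin m → ℂ)) (q : MvPolynomial (Fin m) ℂ) (z : M) :
    evalHom M q z = MvPolynomial.eval (z : Fin m → ℂ) q := by
  induction q using MvPolynomial.induction_on with
  | C a => simp [evalHom]
  | add q r hq hr => simp [map_add, hq, hr]
  | mul_X q i hq =>
      rw [map_mul, ContinuousMap.mul_apply, hq, map_mul, MvPolynomial.eval_X]
      congr 1
      show (evalHom M) (MvPolynomial.X i) z = _
      rw [evalHom, MvPolynomial.aeval_X]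
      rfl

lemma genAlg_eq {m : ℕ} (M : Set (Fin m → ℂ)) :
    genAlg (coordGens M) = closure (Set.range (evalHom M)) := by
  have h : coordGens M = ⇑(evalHom M) '' Set.range MvPolynomial.X := by
    ext g
    constructor
    · rintro ⟨i, hi⟩
      exact ⟨MvPolynomial.X i, ⟨i, rfl⟩, by ext z; simp [evalHom_apply, hi z]⟩
    · rintro ⟨q, ⟨i, rfl⟩, rfl⟩
      exact ⟨i, fun z => by simp [evalHom_apply]⟩
  rw [genAlg, h, ← AlgHom.map_adjoin, MvPolynomial.adjoin_range_X, Algebra.map_top]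
  congr 1

theorem stmt9 {n k : ℕ} (K : Set (Fin n → ℂ)) (hK : IsCompact K)
    (p : Fin k → MvPolynomial (Fin n) ℂ) (P : (Fin n → ℂ) → (Fin k → ℂ))
    (hP : ∀ z i, P z i = MvPolynomial.eval z (p i))
    (hCF : genAlg (coordGens (P '' K)) = Set.univ)
    (hfib : ∀ w : Fin k → ℂ, genAlg (coordGens (K ∩ P ⁻¹' {w})) = Set.univ) :
    genAlg (coordGens K) = Set.univ := by
  classical
  have hPc : Continuous P := by
    have hPeq : P = fun z i => MvPolynomial.eval z (p i) := by
      funext z i; exact hP z i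
    rw [hPeq]
    exact continuous_pi fun i => MvPolynomial.continuous_eval (p i)
  haveI : CompactSpace K := isCompact_iff_compactSpace.mp hK
  haveI : CompactSpace (P '' K) := isCompact_iff_compactSpace.mp (hK.image hPc)
  set Y := P '' K with hY
  let F : C(K, Y) :=
    ⟨fun z => ⟨P z, z, z.2, rfl⟩, (hPc.comp continuous_subtype_val).subtype_mk _⟩
  set A : Subalgebra ℂ C(K, ℂ) := (evalHom K).range.topologicalClosure with hA
  have hAset : (A : Set C(K, ℂ)) = closure (Set.range (evalHom K)) := by
    rw [hA, Subalgebra.topologicalClosure_coe, AlgHom.coe_range]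
  -- pullbacks of continuous functions on Y belong to A
  have hpull : ∀ g : C(Y, ℂ), g.comp F ∈ A := by
    intro g
    have hg : g ∈ closure (Set.range (evalHom Y)) := by
      rw [← genAlg_eq, hCF]; trivial
    have hcont : Continuous fun h : C(Y, ℂ) => h.comp F := ContinuousMap.continuous_precomp F
    have hmaps : Set.MapsTo (fun h : C(Y, ℂ) => h.comp F)
        (Set.range (evalHom Y)) (Set.range (evalHom K)) := by
      rintro _ ⟨q, rfl⟩
      refine ⟨MvPolynomial.bind₁ p q, ?_⟩
      ext z
      have h1 : MvPolynomial.eval (z : Fin n → ℂ) (MvPolynomial.bind₁ p q)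
          = MvPolynomial.eval (fun i => MvPolynomial.eval (z : Fin n → ℂ) (p i)) q := by
        simpa using MvPolynomial.eval₂Hom_bind₁ (RingHom.id ℂ) (z : Fin n → ℂ) p q
      have h2 : (fun i => MvPolynomial.eval (z : Fin n → ℂ) (p i)) = P (z : Fin n → ℂ) := by
        funext i; exact (hP _ i).symm
      simp [evalHom_apply, ContinuousMap.comp_apply, h1, h2, F]
    have := map_mem_closure hcont hg (fun x hx => subset_closure (hmaps hx))
    rwa [← hAset, IsClosed.closure_eq (Subalgebra.isClosed_topologicalClosure _)] at this
  -- it suffices to show every continuous function on K is in A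
  suffices h : ∀ f : C(K, ℂ), f ∈ (A : Set C(K, ℂ)) by
    rw [genAlg_eq]
    apply Set.eq_univ_of_forall
    intro f
    have hf := h f
    rwa [hAset] at hf
  intro f
  have hAclosed : IsClosed (A : Set C(K, ℂ)) := Subalgebra.isClosed_topologicalClosure _
  rw [← hAclosed.closure_eq, Metric.mem_closure_iff]
  intro ε hε
  -- fiberwise approximation
  have key : ∀ y : Y, ∃ q : MvPolynomial (Fin n) ℂ, ∀ z : K,
      P (z : Fin n → ℂ) = (y : Fin k → ℂ) →
      dist (f z) (MvPolynomial.eval (z : Fin n → ℂ) q) < ε / 2 := by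
    intro y
    set w := (y : Fin k → ℂ) with hw
    have hKw : IsCompact (K ∩ P ⁻¹' {w}) := hK.inter_right (isClosed_singleton.preimage hPc)
    haveI : CompactSpace ↥(K ∩ P ⁻¹' {w}) := isCompact_iff_compactSpace.mp hKw
    have hsub : K ∩ P ⁻¹' {w} ⊆ K := Set.inter_subset_left
    set ι : C(↥(K ∩ P ⁻¹' {w}), ↥K) := ⟨Set.inclusion hsub, continuous_inclusion hsub⟩ with hι
    have hf' : f.comp ι ∈ closure (Set.range (evalHom (K ∩ P ⁻¹' {w}))) := by
      rw [← genAlg_eq, hfib w]; trivial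
    obtain ⟨b, ⟨q, rfl⟩, hb⟩ := Metric.mem_closure_iff.mp hf' (ε / 2) (by positivity)
    refine ⟨q, fun z hz => ?_⟩
    have hz' : (z : Fin n → ℂ) ∈ K ∩ P ⁻¹' {w} := ⟨z.2, hz⟩
    have hval : ι ⟨(z : Fin n → ℂ), hz'⟩ = z := Subtype.ext rfl
    calc dist (f z) (MvPolynomial.eval (z : Fin n → ℂ) q)
        = dist ((f.comp ι) ⟨(z : Fin n → ℂ), hz'⟩)
            (evalHom (K ∩ P ⁻¹' {w}) q ⟨(z : Fin n → ℂ), hz'⟩) := by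
          rw [ContinuousMap.comp_apply, hval, evalHom_apply]
      _ ≤ dist (f.comp ι) (evalHom (K ∩ P ⁻¹' {w}) q) := ContinuousMap.dist_apply_le_dist _
      _ < ε / 2 := hb
  choose q hq using key
  -- good sets and their open saturations
  set G : Y → Set ↥K := fun y =>
    {z | dist (f z) (MvPolynomial.eval (z : Fin n → ℂ) (q y)) < ε / 2} with hG
  have hGopen : ∀ y, IsOpen (G y) := by
    intro y
    have hc : Continuous fun z : ↥K =>
        dist (f z) (MvPolynomial.eval (z : Fin n → ℂ) (q y)) :=
      (map_continuous f).dist ((MvPolynomial.continuous_eval (q y)).comp continuous_subtype_val)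
    exact isOpen_lt hc continuous_const
  set V : Y → Set Y := fun y => (F '' (G y)ᶜ)ᶜ with hV
  have hVopen : ∀ y, IsOpen (V y) := by
    intro y
    have hcpt : IsCompact (F '' (G y)ᶜ) :=
      ((hGopen y).isClosed_compl.isCompact).image (map_continuous F)
    exact hcpt.isClosed.isOpen_compl
  have hmemV : ∀ y : Y, y ∈ V y := by
    intro y
    rintro ⟨z, hz, hFz⟩
    exact hz (hq y z (congrArg Subtype.val hFz))
  have hVsub : ∀ (y : Y) (z : ↥K), F z ∈ V y → z ∈ G y := by
    intro y z hz
    by_contra hcon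
    exact hz ⟨z, hcon, rfl⟩
  -- finite subcover and partition of unity
  obtain ⟨t, ht⟩ := (isCompact_univ (X := Y)).elim_finite_subcover V hVopen
    (fun x _ => Set.mem_iUnion.2 ⟨x, hmemV x⟩)
  obtain ⟨φ, hφ⟩ := PartitionOfUnity.exists_isSubordinate (s := (Set.univ : Set Y))
    isClosed_univ (fun i : ↥t => V (i : Y)) (fun i => hVopen _)
    (by
      intro x hx
      have := ht (Set.mem_univ x)
      rwa [← Set.iUnion_subtype (fun y => y ∈ t) (fun i => V (i : Y))] at this)
  let cφ : ↥t → C(Y, ℂ) := fun i =>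
    (⟨Complex.ofReal, Complex.continuous_ofReal⟩ : C(ℝ, ℂ)).comp (φ i)
  set g : C(↥K, ℂ) := ∑ i : ↥t, (cφ i).comp F * evalHom K (q ↑i) with hg
  have hgA : g ∈ (A : Set C(↥K, ℂ)) := by
    refine Subalgebra.sum_mem A fun i _ => Subalgebra.mul_mem A (hpull (cφ i)) ?_
    exact Subalgebra.le_topologicalClosure _ ⟨q ↑i, rfl⟩
  refine ⟨g, hgA, ?_⟩
  have hdist : dist f g ≤ ε / 2 := by
    rw [ContinuousMap.dist_le (le_of_lt (by positivity))]
    intro z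
    have hsum : ∑ i : ↥t, φ i (F z) = 1 := by
      have h1 := φ.sum_eq_one (Set.mem_univ (F z))
      rwa [finsum_eq_sum_of_fintype] at h1
    have hgz : g z = ∑ i : ↥t, ((φ i (F z) : ℝ) : ℂ) * MvPolynomial.eval (z : Fin n → ℂ) (q ↑i) := by
      simp [hg, evalHom_apply, cφ]
    have hfz : f z = ∑ i : ↥t, ((φ i (F z) : ℝ) : ℂ) * f z := by
      rw [← Finset.sum_mul, ← Complex.ofReal_sum, hsum, Complex.ofReal_one, one_mul]
    have hdiff : f z - g z
        = ∑ i : ↥t, ((φ i (F z) : ℝ) : ℂ) * (f z - MvPolynomial.eval (z : Fin n → ℂ) (q ↑i)) := by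
      rw [hgz]
      conv_lhs => rw [hfz]
      rw [← Finset.sum_sub_distrib]
      exact Finset.sum_congr rfl fun i _ => (mul_sub _ _ _).symm
    rw [dist_eq_norm, hdiff]
    calc ‖∑ i : ↥t, ((φ i (F z) : ℝ) : ℂ) * (f z - MvPolynomial.eval (z : Fin n → ℂ) (q ↑i))‖
        ≤ ∑ i : ↥t, ‖((φ i (F z) : ℝ) : ℂ) * (f z - MvPolynomial.eval (z : Fin n → ℂ) (q ↑i))‖ :=
          norm_sum_le _ _
      _ ≤ ∑ i : ↥t, φ i (F z) * (ε / 2) := by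
          refine Finset.sum_le_sum fun i _ => ?_
          rw [norm_mul, Complex.norm_real, Real.norm_eq_abs, abs_of_nonneg (φ.nonneg i (F z))]
          rcases eq_or_ne (φ i (F z)) 0 with h0 | h0
          · rw [h0]; simp
          · have hFV : F z ∈ V (i : Y) :=
              hφ i (subset_closure (Function.mem_support.mpr h0))
            have hzG := hVsub (i : Y) z hFV
            rw [hG] at hzG
            have : ‖f z - MvPolynomial.eval (z : Fin n → ℂ) (q ↑i)‖ ≤ ε / 2 := by
              rw [← dist_eq_norm]; exact le_of_lt hzG
            exact mul_le_mul_of_nonneg_left this (φ.nonneg i (F z))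
      _ = ε / 2 := by rw [← Finset.sum_mul, hsum, one_mul]
  exact lt_of_le_of_lt hdist (by linarith)
end

section
/- Let c ∈ ℂ with |c| = 1, let K ⊆ Γ be a closed set, and let C be a closed subset of the circle {(z_1,z_2) ∈ Γ : z_1 = c}. If K ∪ C does not contain the full circle {(z_1,z_2) ∈ Γ : z_1 = c}, then (K ∪ C)^̂ = K̂ ∪ C. -/
noncomputable def polyHull {m : ℕ} (K : Set (Fin m → ℂ)) : Set (Fin m → ℂ) :=
  {z | ∀ p : MvPolynomial (Fin m) ℂ,
    ‖MvPolynomial.eval z p‖ ≤ sSup ((fun w => ‖MvPolynomial.eval w p‖) '' K)}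

/-- The unit torus, the distinguished boundary of the bidisk. -/
def Torus : Set (Fin 2 → ℂ) := {z | ‖z 0‖ = 1 ∧ ‖z 1‖ = 1}

namespace Stmt13Aux

lemma bddAboveIm {X : Set (Fin 2 → ℂ)} (hX : IsCompact X) (p : MvPolynomial (Fin 2) ℂ) :
    BddAbove ((fun w => ‖MvPolynomial.eval w p‖) '' X) :=
  (hX.image (MvPolynomial.continuous_eval p).norm).bddAbove

lemma isCompact_of_subTorus {X : Set (Fin 2 → ℂ)} (hX : IsClosed X) (hXT : X ⊆ Torus) :
    IsCompact X := by
  apply Metric.isCompact_of_isClosed_isBounded hX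
  apply (Metric.isBounded_closedBall (x := (0 : Fin 2 → ℂ)) (r := 1)).subset
  intro z hz
  rcases hXT hz with ⟨h0, h1⟩
  rw [Metric.mem_closedBall, dist_pi_le_iff zero_le_one]
  intro i
  fin_cases i <;> simp [dist_zero_right, h0, h1]

lemma subset_hull {X : Set (Fin 2 → ℂ)} (hX : IsCompact X) : X ⊆ polyHull X := by
  intro x hx p
  exact le_csSup (bddAboveIm hX p) (Set.mem_image_of_mem _ hx)

lemma hull_mono {X Y : Set (Fin 2 → ℂ)} (hY : IsCompact Y) (hXY : X ⊆ Y) :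
    polyHull X ⊆ polyHull Y := by
  intro z hz p
  refine (hz p).trans (Real.sSup_le ?_ (Real.sSup_nonneg ?_))
  · rintro t ⟨w, hw, rfl⟩
    exact le_csSup (bddAboveIm hY p) (Set.mem_image_of_mem _ (hXY hw))
  · rintro t ⟨w, _, rfl⟩; positivity

lemma lemmaA {X Y : Set (Fin 2 → ℂ)} (hX : IsCompact X) (hY : IsCompact Y)
    {z : Fin 2 → ℂ} (hz : z ∈ polyHull (X ∪ Y)) {φ : MvPolynomial (Fin 2) ℂ} {θ : ℝ}
    (hθ0 : 0 ≤ θ) (hθ1 : θ < 1)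
    (hφX : ∀ x ∈ X, ‖MvPolynomial.eval x φ‖ ≤ 1)
    (hφY : ∀ x ∈ Y, ‖MvPolynomial.eval x φ‖ ≤ θ)
    (hφz : 1 ≤ ‖MvPolynomial.eval z φ‖) : z ∈ polyHull X := by
  intro p
  set MK := sSup ((fun w => ‖MvPolynomial.eval w p‖) '' X) with hMKdef
  set MC := sSup ((fun w => ‖MvPolynomial.eval w p‖) '' Y) with hMCdef
  have hMK0 : 0 ≤ MK := Real.sSup_nonneg (by rintro t ⟨w, _, rfl⟩; positivity)
  have hMC0 : 0 ≤ MC := Real.sSup_nonneg (by rintro t ⟨w, _, rfl⟩; positivity)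
  have key : ∀ n : ℕ, ‖MvPolynomial.eval z p‖ ≤ max MK (MC * θ ^ n) := by
    intro n
    have h1 : ‖MvPolynomial.eval z p‖ ≤ ‖MvPolynomial.eval z (p * φ ^ n)‖ := by
      rw [map_mul, map_pow, norm_mul, norm_pow]
      nlinarith [norm_nonneg (MvPolynomial.eval z p), one_le_pow₀ hφz (n:=n)]
    refine h1.trans ((hz (p * φ ^ n)).trans (Real.sSup_le ?_ (le_trans hMK0 (le_max_left _ _))))
    rintro t ⟨w, hw, rfl⟩
    simp only [map_mul, map_pow, norm_mul, norm_pow]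
    rcases hw with hw | hw
    · refine le_trans ?_ (le_max_left _ _)
      have hp : ‖MvPolynomial.eval w p‖ ≤ MK := le_csSup (bddAboveIm hX p) (Set.mem_image_of_mem _ hw)
      have hφ : ‖MvPolynomial.eval w φ‖ ^ n ≤ 1 := pow_le_one₀ (norm_nonneg _) (hφX w hw)
      nlinarith [norm_nonneg (MvPolynomial.eval w p)]
    · refine le_trans ?_ (le_max_right _ _)
      have hp : ‖MvPolynomial.eval w p‖ ≤ MC := le_csSup (bddAboveIm hY p) (Set.mem_image_of_mem _ hw)
      have hφ : ‖MvPolynomial.eval w φ‖ ^ n ≤ θ ^ n :=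
        pow_le_pow_left₀ (norm_nonneg _) (hφY w hw) n
      nlinarith [norm_nonneg (MvPolynomial.eval w p), pow_nonneg (norm_nonneg (MvPolynomial.eval w φ)) n]
  by_contra hcon
  push_neg at hcon
  have h4 : ∀ n : ℕ, ‖MvPolynomial.eval z p‖ ≤ MC * θ ^ n := by
    intro n
    rcases le_max_iff.1 (key n) with h | h
    · exact absurd h (not_le.2 hcon)
    · exact h
  have hlim : Filter.Tendsto (fun n : ℕ => MC * θ ^ n) Filter.atTop (nhds 0) := by
    simpa using (tendsto_pow_atTop_nhds_zero_of_lt_one hθ0 hθ1).const_mul MC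
  have hpos : 0 < ‖MvPolynomial.eval z p‖ := lt_of_le_of_lt hMK0 hcon
  obtain ⟨n, hn⟩ := ((hlim.eventually (gt_mem_nhds hpos)).exists)
  exact absurd (h4 n) (not_le.2 hn)




/-- `f` is uniformly approximable by polynomials on `B`. -/
def ApproxOn (B : Set ℂ) (f : ℂ → ℂ) : Prop :=
  ∀ ε : ℝ, 0 < ε → ∃ p : Polynomial ℂ, ∀ ζ ∈ B, ‖f ζ - p.eval ζ‖ ≤ ε

namespace ApproxOn

variable {B : Set ℂ} {f g : ℂ → ℂ}

lemma of_poly (p : Polynomial ℂ) : ApproxOn B fun ζ => p.eval ζ := by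
  intro ε hε
  exact ⟨p, fun ζ _ => by simp [hε.le]⟩

lemma congr (hfg : ∀ ζ ∈ B, f ζ = g ζ) (hf : ApproxOn B f) : ApproxOn B g := by
  intro ε hε
  obtain ⟨p, hp⟩ := hf ε hε
  exact ⟨p, fun ζ hζ => by rw [← hfg ζ hζ]; exact hp ζ hζ⟩

lemma of_uniform
    (h : ∀ ε : ℝ, 0 < ε → ∃ g, ApproxOn B g ∧ ∀ ζ ∈ B, ‖f ζ - g ζ‖ ≤ ε) :
    ApproxOn B f := by
  intro ε hε
  obtain ⟨g, hg, hfg⟩ := h (ε / 2) (by positivity)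
  obtain ⟨p, hp⟩ := hg (ε / 2) (by positivity)
  refine ⟨p, fun ζ hζ => ?_⟩
  calc ‖f ζ - p.eval ζ‖ = ‖(f ζ - g ζ) + (g ζ - p.eval ζ)‖ := by ring_nf
    _ ≤ ‖f ζ - g ζ‖ + ‖g ζ - p.eval ζ‖ := norm_add_le _ _
    _ ≤ ε / 2 + ε / 2 := add_le_add (hfg ζ hζ) (hp ζ hζ)
    _ = ε := by ring

lemma bound (hB : IsCompact B) (hf : ApproxOn B f) :
    ∃ M : ℝ, 0 ≤ M ∧ ∀ ζ ∈ B, ‖f ζ‖ ≤ M := by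
  obtain ⟨p, hp⟩ := hf 1 one_pos
  obtain ⟨M, hM⟩ := hB.exists_bound_of_continuousOn p.continuous.continuousOn
  refine ⟨max 0 M + 1, by positivity, fun ζ hζ => ?_⟩
  calc ‖f ζ‖ = ‖(f ζ - p.eval ζ) + p.eval ζ‖ := by ring_nf
    _ ≤ ‖f ζ - p.eval ζ‖ + ‖p.eval ζ‖ := norm_add_le _ _
    _ ≤ 1 + max 0 M := add_le_add (hp ζ hζ) ((hM ζ hζ).trans (le_max_right _ _))
    _ = max 0 M + 1 := by ring

lemma add (hf : ApproxOn B f) (hg : ApproxOn B g) : ApproxOn B (f + g) := by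
  intro ε hε
  obtain ⟨p, hp⟩ := hf (ε / 2) (by positivity)
  obtain ⟨q, hq⟩ := hg (ε / 2) (by positivity)
  refine ⟨p + q, fun ζ hζ => ?_⟩
  have : (f + g) ζ - (p + q).eval ζ = (f ζ - p.eval ζ) + (g ζ - q.eval ζ) := by
    simp [Polynomial.eval_add]; ring
  rw [this]
  calc ‖_ + _‖ ≤ ‖f ζ - p.eval ζ‖ + ‖g ζ - q.eval ζ‖ := norm_add_le _ _
    _ ≤ ε / 2 + ε / 2 := add_le_add (hp ζ hζ) (hq ζ hζ)
    _ = ε := by ring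

lemma mul (hB : IsCompact B) (hf : ApproxOn B f) (hg : ApproxOn B g) :
    ApproxOn B (f * g) := by
  intro ε hε
  obtain ⟨Mf, hMf0, hMf⟩ := hf.bound hB
  obtain ⟨Mg, hMg0, hMg⟩ := hg.bound hB
  set δ : ℝ := min 1 (ε / (Mf + Mg + 2)) with hδdef
  have hδpos : 0 < δ := lt_min one_pos (by positivity)
  obtain ⟨p, hp⟩ := hf δ hδpos
  obtain ⟨q, hq⟩ := hg δ hδpos
  refine ⟨p * q, fun ζ hζ => ?_⟩
  have hqb : ‖q.eval ζ‖ ≤ Mg + 1 := by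
    calc ‖q.eval ζ‖ = ‖g ζ - (g ζ - q.eval ζ)‖ := by ring_nf
      _ ≤ ‖g ζ‖ + ‖g ζ - q.eval ζ‖ := norm_sub_le _ _
      _ ≤ Mg + 1 := add_le_add (hMg ζ hζ) ((hq ζ hζ).trans (min_le_left _ _))
  have key : (f * g) ζ - (p * q).eval ζ
      = f ζ * (g ζ - q.eval ζ) + (f ζ - p.eval ζ) * q.eval ζ := by
    simp [Polynomial.eval_mul]; ring
  rw [key]
  have h1 : ‖f ζ * (g ζ - q.eval ζ)‖ ≤ Mf * δ := by
    rw [norm_mul]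
    exact mul_le_mul (hMf ζ hζ) (hq ζ hζ) (norm_nonneg _) hMf0
  have h2 : ‖(f ζ - p.eval ζ) * q.eval ζ‖ ≤ δ * (Mg + 1) := by
    rw [norm_mul]
    exact mul_le_mul (hp ζ hζ) hqb (norm_nonneg _) hδpos.le
  have hδε : δ * (Mf + Mg + 1) ≤ ε := by
    have h3 : δ ≤ ε / (Mf + Mg + 2) := min_le_right _ _
    have h4 : 0 < Mf + Mg + 2 := by positivity
    rw [le_div_iff₀ h4] at h3
    nlinarith [hδpos.le]
  calc ‖_ + _‖ ≤ ‖f ζ * (g ζ - q.eval ζ)‖ + ‖(f ζ - p.eval ζ) * q.eval ζ‖ := norm_add_le _ _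
    _ ≤ Mf * δ + δ * (Mg + 1) := add_le_add h1 h2
    _ = δ * (Mf + Mg + 1) := by ring
    _ ≤ ε := hδε

lemma pow (hB : IsCompact B) (hf : ApproxOn B f) (n : ℕ) :
    ApproxOn B fun ζ => (f ζ) ^ n := by
  induction n with
  | zero => exact (of_poly 1).congr (by simp)
  | succ n ih =>
      have := (hf.mul hB ih)
      exact this.congr (fun ζ _ => by simp [Pi.mul_apply, pow_succ]; ring)

lemma const_mul (hB : IsCompact B) (hf : ApproxOn B f) (a : ℂ) :
    ApproxOn B fun ζ => a * f ζ :=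
  ((of_poly (Polynomial.C a)).mul hB hf).congr (fun ζ _ => by simp [Pi.mul_apply])

lemma sum (hB : IsCompact B) {F : ℕ → ℂ → ℂ} {n : ℕ} (hF : ∀ k < n, ApproxOn B (F k)) :
    ApproxOn B fun ζ => ∑ k ∈ Finset.range n, F k ζ := by
  induction n with
  | zero => exact (of_poly 0).congr (by simp)
  | succ n ih =>
      have h1 : ApproxOn B fun ζ => ∑ k ∈ Finset.range n, F k ζ :=
        ih (fun k hk => hF k (hk.trans (Nat.lt_succ_self n)))
      have h2 : ApproxOn B (F n) := hF n (Nat.lt_succ_self n)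
      exact (h1.add h2).congr (fun ζ _ => by simp [Finset.sum_range_succ])

end ApproxOn


-- one-step resolvent identity
lemma inv_sub_inv' {ζ a a' : ℂ} (ha : ζ - a ≠ 0) (ha' : ζ - a' ≠ 0) :
    (ζ - a')⁻¹ - (ζ - a)⁻¹ = (a' - a) * ((ζ - a)⁻¹ * (ζ - a')⁻¹) := by
  have h : (a' - a) * ((ζ - a)⁻¹ * (ζ - a')⁻¹)
      = ((ζ - a) - (ζ - a')) * ((ζ - a)⁻¹ * (ζ - a')⁻¹) := by ring
  rw [h, sub_mul,
    show (ζ-a) * ((ζ-a)⁻¹ * (ζ-a')⁻¹) = ((ζ-a) * (ζ-a)⁻¹) * (ζ-a')⁻¹ by ring,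
    show (ζ-a') * ((ζ-a)⁻¹ * (ζ-a')⁻¹) = ((ζ-a') * (ζ-a')⁻¹) * (ζ-a)⁻¹ by ring,
    mul_inv_cancel₀ ha, mul_inv_cancel₀ ha', one_mul, one_mul]

lemma geom_error {ζ a a' : ℂ} (ha : ζ - a ≠ 0) (ha' : ζ - a' ≠ 0) (n : ℕ) :
    (ζ - a')⁻¹ - ∑ k ∈ Finset.range (n + 1), (a' - a) ^ k * ((ζ - a)⁻¹) ^ (k + 1)
      = (a' - a) ^ (n + 1) * ((ζ - a)⁻¹) ^ (n + 1) * (ζ - a')⁻¹ := by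
  induction n with
  | zero =>
      have := inv_sub_inv' ha ha'
      simpa [mul_assoc] using this
  | succ n ih =>
      rw [Finset.sum_range_succ]
      have h1 := inv_sub_inv' ha ha'
      have : (ζ - a')⁻¹ - (∑ k ∈ Finset.range (n + 1), (a' - a) ^ k * ((ζ - a)⁻¹) ^ (k + 1)
          + (a' - a) ^ (n + 1) * ((ζ - a)⁻¹) ^ (n + 2))
          = (a' - a) ^ (n + 1) * ((ζ - a)⁻¹) ^ (n + 1) * (ζ - a')⁻¹
            - (a' - a) ^ (n + 1) * ((ζ - a)⁻¹) ^ (n + 2) := by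
        rw [← ih]; ring
      rw [this]
      have h2 : (ζ - a')⁻¹ - (ζ - a)⁻¹ = (a' - a) * ((ζ - a)⁻¹ * (ζ - a')⁻¹) := h1
      calc (a' - a) ^ (n + 1) * ((ζ - a)⁻¹) ^ (n + 1) * (ζ - a')⁻¹
            - (a' - a) ^ (n + 1) * ((ζ - a)⁻¹) ^ (n + 2)
          = (a' - a) ^ (n + 1) * ((ζ - a)⁻¹) ^ (n + 1) * ((ζ - a')⁻¹ - (ζ - a)⁻¹) := by ring
        _ = (a' - a) ^ (n + 1 + 1) * ((ζ - a)⁻¹) ^ (n + 1 + 1) * (ζ - a')⁻¹ := by rw [h2]; ring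

lemma approx_inv_push {B : Set ℂ} (hB : IsCompact B) {a a' : ℂ} {d r : ℝ}
    (hd : 0 < d) (hr0 : 0 ≤ r) (hr1 : r < 1)
    (hdist : ∀ ζ ∈ B, d ≤ ‖ζ - a‖) (ha' : ‖a' - a‖ ≤ r * d)
    (h : ApproxOn B fun ζ => (ζ - a)⁻¹) : ApproxOn B fun ζ => (ζ - a')⁻¹ := by
  apply ApproxOn.of_uniform
  intro ε hε
  -- choose n with r^(n+1) / (d * (1-r)) ≤ ε
  have hdr : 0 < d * (1 - r) := by nlinarith
  obtain ⟨n, hn⟩ := exists_pow_lt_of_lt_one (show (0:ℝ) < ε * (d * (1 - r)) by positivity) hr1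
  refine ⟨fun ζ => ∑ k ∈ Finset.range (n + 1), (a' - a) ^ k * ((ζ - a)⁻¹) ^ (k + 1), ?_, ?_⟩
  · refine ApproxOn.sum hB (fun k _ => ?_)
    exact ((ApproxOn.pow hB h (k + 1)).const_mul hB ((a' - a) ^ k)).congr (fun ζ _ => rfl)
  · intro ζ hζ
    have h1 : d ≤ ‖ζ - a‖ := hdist ζ hζ
    have hζa : ζ - a ≠ 0 := by
      intro hcon; rw [hcon] at h1; simp at h1; linarith
    have h2 : d * (1 - r) ≤ ‖ζ - a'‖ := by
      have h5 := norm_sub_norm_le (ζ - a) (ζ - a')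
      have heq : (ζ - a) - (ζ - a') = a' - a := by ring
      rw [heq] at h5
      nlinarith
    have hζa' : ζ - a' ≠ 0 := by
      intro hcon; rw [hcon] at h2; simp at h2; nlinarith
    rw [show (ζ - a')⁻¹ - ∑ k ∈ Finset.range (n + 1), (a' - a) ^ k * ((ζ - a)⁻¹) ^ (k + 1)
        = (a' - a) ^ (n + 1) * ((ζ - a)⁻¹) ^ (n + 1) * (ζ - a')⁻¹ from geom_error hζa hζa' n]
    have hb1 : ‖(a' - a) ^ (n + 1)‖ ≤ (r * d) ^ (n + 1) := by
      rw [norm_pow]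
      exact pow_le_pow_left₀ (norm_nonneg _) ha' _
    have hb2 : ‖((ζ - a)⁻¹) ^ (n + 1)‖ ≤ (d⁻¹) ^ (n + 1) := by
      rw [norm_pow]
      refine pow_le_pow_left₀ (norm_nonneg _) ?_ _
      rw [norm_inv]
      exact inv_anti₀ hd h1
    have hb3 : ‖(ζ - a')⁻¹‖ ≤ (d * (1 - r))⁻¹ := by
      rw [norm_inv]
      exact inv_anti₀ hdr h2
    calc ‖(a' - a) ^ (n + 1) * ((ζ - a)⁻¹) ^ (n + 1) * (ζ - a')⁻¹‖
        = ‖(a' - a) ^ (n + 1)‖ * ‖((ζ - a)⁻¹) ^ (n + 1)‖ * ‖(ζ - a')⁻¹‖ := by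
          rw [norm_mul, norm_mul]
      _ ≤ (r * d) ^ (n + 1) * (d⁻¹) ^ (n + 1) * (d * (1 - r))⁻¹ := by
          refine mul_le_mul (mul_le_mul hb1 hb2 (norm_nonneg _) (by positivity))
            hb3 (norm_nonneg _) (by positivity)
      _ = r ^ (n + 1) / (d * (1 - r)) := by
          rw [mul_pow]
          field_simp
          rw [one_div, inv_pow, mul_assoc (r ^ (n + 1)), mul_inv_cancel₀ (pow_ne_zero _ hd.ne'), mul_one]
      _ ≤ ε := by
          rw [div_le_iff₀ hdr]
          calc r ^ (n + 1) ≤ r ^ n := pow_le_pow_of_le_one hr0 hr1.le (Nat.le_succ n)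
            _ ≤ ε * (d * (1 - r)) := hn.le
lemma far_step {ζ b : ℂ} (hζb : ζ - b ≠ 0) : b * (ζ - b)⁻¹ + 1 = ζ * (ζ - b)⁻¹ := by
  have h : ζ * (ζ - b)⁻¹ - b * (ζ - b)⁻¹ = (ζ - b) * (ζ - b)⁻¹ := by ring
  rw [mul_inv_cancel₀ hζb] at h
  linear_combination -h

lemma far_error {ζ b : ℂ} (hζb : ζ - b ≠ 0) (hb : b ≠ 0) (n : ℕ) :
    (ζ - b)⁻¹ - ∑ k ∈ Finset.range (n + 1), (-(b⁻¹) ^ (k + 1)) * ζ ^ k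
      = ζ ^ (n + 1) * (b⁻¹) ^ (n + 1) * (ζ - b)⁻¹ := by
  induction n with
  | zero =>
      simp only [Finset.sum_range_one, pow_zero, pow_one, mul_one, zero_add]
      have h1 : (ζ - b)⁻¹ - -b⁻¹ = b⁻¹ * (b * (ζ - b)⁻¹ + 1) := by
        rw [mul_add, ← mul_assoc, inv_mul_cancel₀ hb, one_mul, mul_one]; ring
      rw [h1, far_step hζb]
      ring
  | succ n ih =>
      rw [Finset.sum_range_succ]
      have h4 : (ζ - b)⁻¹ - (∑ k ∈ Finset.range (n + 1), (-(b⁻¹) ^ (k + 1)) * ζ ^ k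
          + (-(b⁻¹) ^ (n + 2)) * ζ ^ (n + 1))
          = ζ ^ (n + 1) * (b⁻¹) ^ (n + 1) * (ζ - b)⁻¹ + (b⁻¹) ^ (n + 2) * ζ ^ (n + 1) := by
        rw [← ih]; ring
      rw [h4]
      have h5 : ζ ^ (n + 1) * (b⁻¹) ^ (n + 1) * (ζ - b)⁻¹ + (b⁻¹) ^ (n + 2) * ζ ^ (n + 1)
          = ζ ^ (n + 1) * (b⁻¹) ^ (n + 2) * (b * (ζ - b)⁻¹ + 1) := by
        have hbb : b⁻¹ ^ (n + 2) * b = b⁻¹ ^ (n + 1) := by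
          rw [pow_succ]
          field_simp
        calc ζ ^ (n + 1) * (b⁻¹) ^ (n + 1) * (ζ - b)⁻¹ + (b⁻¹) ^ (n + 2) * ζ ^ (n + 1)
            = ζ ^ (n + 1) * ((b⁻¹ ^ (n + 2) * b) * (ζ - b)⁻¹) + (b⁻¹) ^ (n + 2) * ζ ^ (n + 1) := by
              rw [hbb]; ring
          _ = ζ ^ (n + 1) * (b⁻¹) ^ (n + 2) * (b * (ζ - b)⁻¹ + 1) := by ring
      rw [h5, far_step hζb]
      ring

lemma approx_inv_far {B : Set ℂ} (hB : IsCompact B) (hB1 : ∀ ζ ∈ B, ‖ζ‖ ≤ 1) {b : ℂ}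
    (hb : 3 ≤ ‖b‖) : ApproxOn B fun ζ => (ζ - b)⁻¹ := by
  apply ApproxOn.of_uniform
  intro ε hε
  obtain ⟨n, hn⟩ := exists_pow_lt_of_lt_one (show (0:ℝ) < 2 * ε by positivity)
    (show (3:ℝ)⁻¹ < 1 by norm_num)
  refine ⟨fun ζ => ∑ k ∈ Finset.range (n + 1), (-(b⁻¹) ^ (k + 1)) * ζ ^ k, ?_, ?_⟩
  · refine ApproxOn.sum hB (fun k _ => ?_)
    exact (ApproxOn.of_poly (Polynomial.C (-(b⁻¹) ^ (k + 1)) * Polynomial.X ^ k)).congr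
      (fun ζ _ => by simp)
  · intro ζ hζ
    have h1 : 2 ≤ ‖ζ - b‖ := by
      have := norm_sub_norm_le b ζ
      have h2 : ‖ζ - b‖ = ‖b - ζ‖ := by rw [norm_sub_rev]
      have h3 := hB1 ζ hζ
      rw [h2]; linarith
    have hζb : ζ - b ≠ 0 := by
      intro h; rw [h] at h1; simp at h1; linarith
    have hb0 : b ≠ 0 := by
      intro h; rw [h] at hb; simp at hb; linarith
    rw [far_error hζb hb0 n]
    have hbn : ‖(b⁻¹ : ℂ)‖ ≤ 3⁻¹ := by
      rw [norm_inv]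
      exact inv_anti₀ (by norm_num) hb
    calc ‖ζ ^ (n + 1) * (b⁻¹) ^ (n + 1) * (ζ - b)⁻¹‖
        = ‖ζ‖ ^ (n + 1) * ‖(b⁻¹ : ℂ)‖ ^ (n + 1) * ‖(ζ - b)⁻¹‖ := by
          rw [norm_mul, norm_mul, norm_pow, norm_pow]
      _ ≤ 1 * (3⁻¹) ^ (n + 1) * 2⁻¹ := by
          refine mul_le_mul (mul_le_mul (pow_le_one₀ (norm_nonneg _) (hB1 ζ hζ))
            (pow_le_pow_left₀ (norm_nonneg _) hbn _) (by positivity) zero_le_one) ?_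
            (norm_nonneg _) (by positivity)
          rw [norm_inv]
          exact inv_anti₀ (by norm_num) h1
      _ ≤ ε := by
          have h6 : ((3:ℝ)⁻¹) ^ (n + 1) ≤ (3⁻¹ : ℝ) ^ n :=
            pow_le_pow_of_le_one (by norm_num) (by norm_num) (Nat.le_succ n)
          nlinarith [hn]


lemma norm_sq_eq_normSq (z : ℂ) : ‖z‖ ^ 2 = Complex.normSq z := by
  rw [Complex.sq_norm]

lemma path_dist {ζ l : ℂ} {ρ t : ℝ} (hζ : ‖ζ‖ = 1) (hl : ‖l‖ = 1) (hρ : 0 < ρ)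
    (hρ1 : ρ ≤ 1) (hζl : ρ ≤ ‖ζ - l‖) (ht0 : 0 ≤ t) (ht3 : t ≤ 3) :
    ρ / 2 ≤ ‖ζ - (t : ℂ) * l‖ := by
  set s : ℝ := (ζ * (starRingEnd ℂ) l).re with hs
  have hnζ : Complex.normSq ζ = 1 := by rw [← norm_sq_eq_normSq, hζ]; norm_num
  have hnl : Complex.normSq l = 1 := by rw [← norm_sq_eq_normSq, hl]; norm_num
  have h1 : Complex.normSq (ζ - l) = 2 - 2 * s := by
    rw [Complex.normSq_sub, hnζ, hnl]; ring
  have h2 : ρ ^ 2 ≤ 2 - 2 * s := by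
    rw [← h1, ← norm_sq_eq_normSq]
    exact pow_le_pow_left₀ hρ.le hζl 2
  have h3 : Complex.normSq (ζ - (t:ℂ) * l) = 1 + t ^ 2 - 2 * t * s := by
    rw [Complex.normSq_sub, hnζ, Complex.normSq_mul, hnl]
    have h4 : (ζ * (starRingEnd ℂ) ((t:ℂ) * l)).re = t * s := by
      rw [map_mul, Complex.conj_ofReal]
      rw [show ζ * ((t:ℂ) * (starRingEnd ℂ) l) = (t:ℂ) * (ζ * (starRingEnd ℂ) l) by ring]
      rw [Complex.re_ofReal_mul]
    rw [h4]
    have h5 : Complex.normSq (t:ℂ) = t ^ 2 := by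
      rw [Complex.normSq_ofReal]; ring
    rw [h5]; ring
  have h6 : (ρ / 2) ^ 2 ≤ Complex.normSq (ζ - (t:ℂ) * l) := by
    rw [h3]
    have hs' : s ≤ 1 - ρ ^ 2 / 2 := by linarith
    have h7 : 0 ≤ t * (1 - ρ ^ 2 / 2 - s) := mul_nonneg ht0 (by linarith)
    have h8 : (0:ℝ) ≤ ρ ^ 2 * (3 - ρ ^ 2) := mul_nonneg (sq_nonneg ρ) (by nlinarith)
    nlinarith [sq_nonneg (t - 1 + ρ ^ 2 / 2)]
  rw [← norm_sq_eq_normSq] at h6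
  nlinarith [norm_nonneg (ζ - (t:ℂ) * l)]

lemma approx_inv_of_gap {B : Set ℂ} (hB : IsCompact B) (hB1 : ∀ ζ ∈ B, ‖ζ‖ = 1) {l : ℂ}
    (hl : ‖l‖ = 1) {ρ : ℝ} (hρ : 0 < ρ) (hρ1 : ρ ≤ 1) (hgap : ∀ ζ ∈ B, ρ ≤ ‖ζ - l‖)
    {w : ℂ} (hw : ‖w‖ < 1) : ApproxOn B fun ζ => (ζ - w)⁻¹ := by
  obtain ⟨N, hN⟩ := exists_nat_gt (12 / ρ)
  have hN0 : (0:ℝ) < N := lt_trans (by positivity) hN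
  have hstep : (3:ℝ) / N ≤ 1 / 2 * (ρ / 2) := by
    rw [div_le_iff₀ hN0]
    rw [div_lt_iff₀ hρ] at hN
    nlinarith
  have main : ∀ j : ℕ, j ≤ N → ApproxOn B fun ζ => (ζ - ((3 - 3 * j / N : ℝ) : ℂ) * l)⁻¹ := by
    intro j
    induction j with
    | zero =>
        intro _
        refine (approx_inv_far hB (fun ζ hζ => (hB1 ζ hζ).le) ?_).congr (fun ζ _ => rfl)
        rw [norm_mul, hl, mul_one,
          show ((3 - 3 * (0:ℕ) / N : ℝ) : ℂ) = ((3:ℝ):ℂ) by push_cast; ring,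
          Complex.norm_real]
        norm_num
    | succ j ih =>
        intro hj
        have hjN : (j:ℝ) ≤ N := by exact_mod_cast Nat.le_of_succ_le hj
        have hj1N : ((j:ℝ) + 1) ≤ N := by exact_mod_cast hj
        set t : ℝ := 3 - 3 * j / N with htdef
        have ht0 : 0 ≤ t := by
          rw [htdef]
          have : 3 * (j:ℝ) / N ≤ 3 := by
            rw [div_le_iff₀ hN0]; nlinarith
          linarith
        have ht3 : t ≤ 3 := by
          rw [htdef]
          have : 0 ≤ 3 * (j:ℝ) / N := by positivity
          linarith
        refine approx_inv_push hB (a := ((t:ℝ):ℂ) * l) (d := ρ/2) (r := 1/2)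
          (by positivity) (by norm_num) (by norm_num)
          (fun ζ hζ => path_dist (hB1 ζ hζ) hl hρ hρ1 (hgap ζ hζ) ht0 ht3) ?_
          (ih (Nat.le_of_succ_le hj))
        have hdiff : ((3 - 3 * (j+1:ℕ) / N : ℝ) : ℂ) * l - ((t:ℝ):ℂ) * l
            = ((-(3/N) : ℝ) : ℂ) * l := by
          rw [htdef]; push_cast; ring
        rw [hdiff, norm_mul, hl, Complex.norm_real, mul_one, Real.norm_eq_abs, abs_neg,
          abs_of_pos (by positivity)]
        exact hstep
  have hNN : ((3 - 3 * N / N : ℝ) : ℂ) = 0 := by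
    have : (N:ℝ) ≠ 0 := ne_of_gt hN0
    field_simp
    simp
  have h0 : ApproxOn B fun ζ => (ζ - 0)⁻¹ := by
    have := main N le_rfl
    rw [hNN] at this
    exact this.congr (fun ζ _ => by simp)
  refine approx_inv_push hB (a := 0) (d := 1) (r := (‖w‖ + 1)/2) one_pos (by positivity)
    (by linarith) (fun ζ hζ => by rw [sub_zero, hB1 ζ hζ]) ?_ h0
  rw [sub_zero, mul_one]
  linarith

lemma exists_peak {B : Set ℂ} (hB : IsCompact B) (hB1 : ∀ ζ ∈ B, ‖ζ‖ = 1) {l : ℂ}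
    (hl : ‖l‖ = 1) {ρ : ℝ} (hρ : 0 < ρ) (hρ1 : ρ ≤ 1) (hgap : ∀ ζ ∈ B, ρ ≤ ‖ζ - l‖)
    {w : ℂ} (hw : ‖w‖ < 1) :
    ∃ g : Polynomial ℂ, g.eval w = 1 ∧ ∀ ζ ∈ B, ‖g.eval ζ‖ ≤ 1 / 2 := by
  obtain ⟨p, hp⟩ := approx_inv_of_gap hB hB1 hl hρ hρ1 hgap hw (1/8) (by norm_num)
  refine ⟨1 - (Polynomial.X - Polynomial.C w) * p, by simp, fun ζ hζ => ?_⟩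
  have hζ1 := hB1 ζ hζ
  have hζw : ζ - w ≠ 0 := by
    intro h
    have : ζ = w := by linear_combination h
    rw [this] at hζ1
    rw [hζ1] at hw
    linarith
  have heval : (1 - (Polynomial.X - Polynomial.C w) * p).eval ζ
      = (ζ - w) * ((ζ - w)⁻¹ - p.eval ζ) := by
    rw [mul_sub, mul_inv_cancel₀ hζw]
    simp [Polynomial.eval_mul, Polynomial.eval_sub]
  rw [heval, norm_mul]
  have h1 : ‖ζ - w‖ ≤ 2 := by
    calc ‖ζ - w‖ ≤ ‖ζ‖ + ‖w‖ := norm_sub_le _ _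
      _ ≤ 2 := by rw [hζ1]; linarith
  calc ‖ζ - w‖ * ‖(ζ - w)⁻¹ - p.eval ζ‖ ≤ 2 * (1/8) :=
        mul_le_mul h1 (hp ζ hζ) (norm_nonneg _) (by norm_num)
    _ ≤ 1/2 := by norm_num

noncomputable def emb (q : Polynomial ℂ) : MvPolynomial (Fin 2) ℂ :=
  Polynomial.aeval (MvPolynomial.X 1) q

lemma eval_emb (q : Polynomial ℂ) (z : Fin 2 → ℂ) :
    MvPolynomial.eval z (emb q) = q.eval (z 1) := by
  have h := Polynomial.aeval_algHom_apply
    (MvPolynomial.aeval z : MvPolynomial (Fin 2) ℂ →ₐ[ℂ] ℂ) (MvPolynomial.X 1) q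
  simpa [emb] using h.symm

lemma conj_mul_self {c : ℂ} (hc : ‖c‖ = 1) : (starRingEnd ℂ) c * c = 1 := by
  rw [mul_comm, Complex.mul_conj]
  rw [show Complex.normSq c = 1 by rw [← norm_sq_eq_normSq, hc]; norm_num]
  simp

lemma norm_one_add_conj_mul {a b : ℂ} (ha : ‖a‖ = 1) (hb : ‖b‖ = 1) :
    ‖1 + (starRingEnd ℂ) a * b‖ ^ 2 = 4 - ‖b - a‖ ^ 2 := by
  rw [norm_sq_eq_normSq, norm_sq_eq_normSq]
  have hna : Complex.normSq a = 1 := by rw [← norm_sq_eq_normSq, ha]; norm_num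
  have hnb : Complex.normSq b = 1 := by rw [← norm_sq_eq_normSq, hb]; norm_num
  rw [Complex.normSq_add, Complex.normSq_sub, Complex.normSq_mul, Complex.normSq_conj,
    hna, hnb, Complex.normSq_one]
  have harg : (1:ℂ) * (starRingEnd ℂ) ((starRingEnd ℂ) a * b) = (starRingEnd ℂ) (b * (starRingEnd ℂ) a) := by
    simp only [one_mul, map_mul, Complex.conj_conj]; ring
  rw [harg, Complex.conj_re]
  ring

end Stmt13Aux

open Stmt13Aux in
set_option maxHeartbeats 2000000 in
theorem stmt13 (c : ℂ) (hc : ‖c‖ = 1) (K : Set (Fin 2 → ℂ)) (hKΓ : K ⊆ Torus)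
    (hKcl : IsClosed K) (C : Set (Fin 2 → ℂ)) (hCsub : C ⊆ {z ∈ Torus | z 0 = c})
    (hCcl : IsClosed C) (hfull : ¬ {z ∈ Torus | z 0 = c} ⊆ K ∪ C) :
    polyHull (K ∪ C) = polyHull K ∪ C := by
  classical
  have hCT : C ⊆ Torus := fun x hx => (hCsub hx).1
  have hKcomp : IsCompact K := isCompact_of_subTorus hKcl hKΓ
  have hCcomp : IsCompact C := isCompact_of_subTorus hCcl hCT
  have hKCcomp : IsCompact (K ∪ C) := hKcomp.union hCcomp
  have hKCT : K ∪ C ⊆ Torus := Set.union_subset hKΓ hCT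
  apply Set.Subset.antisymm
  · -- hard direction
    intro z hz
    by_cases hzC : z ∈ C
    · exact Or.inr hzC
    refine Or.inl ?_
    -- the gap point
    obtain ⟨μ, hμmem, hμnot⟩ := Set.not_subset.1 hfull
    obtain ⟨hμT, hμ0⟩ := hμmem
    have hl1 : ‖μ 1‖ = 1 := hμT.2
    -- the gap radius
    obtain ⟨ε, hε, hball⟩ := Metric.isOpen_iff.1 (hKcl.union hCcl).isOpen_compl μ hμnot
    set ρ : ℝ := min (ε / 2) 1 with hρdef
    have hρ : 0 < ρ := lt_min (by positivity) one_pos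
    have hρ1 : ρ ≤ 1 := min_le_right _ _
    have gap : ∀ x ∈ K ∪ C, ρ ≤ ‖x 0 - c‖ ∨ ρ ≤ ‖x 1 - μ 1‖ := by
      intro x hx
      by_contra hcon
      push_neg at hcon
      obtain ⟨h1, h2⟩ := hcon
      have hρε : ρ ≤ ε / 2 := min_le_left _ _
      have hxball : x ∈ Metric.ball μ ε := by
        rw [Metric.mem_ball]
        refine (dist_pi_lt_iff hε).2 (fun i => ?_)
        fin_cases i
        · show dist (x 0) (μ 0) < ε
          rw [dist_eq_norm, hμ0]
          linarith
        · show dist (x 1) (μ 1) < ε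
          rw [dist_eq_norm]
          linarith
      exact (hball hxball) hx
    -- coordinate bounds
    have coordBound : ∀ i : Fin 2, ‖z i‖ ≤ 1 := by
      intro i
      have h := hz (MvPolynomial.X i)
      rw [MvPolynomial.eval_X] at h
      refine h.trans (Real.sSup_le ?_ zero_le_one)
      rintro t ⟨x, hx, rfl⟩
      simp only [MvPolynomial.eval_X]
      have hxT := hKCT hx
      fin_cases i
      exacts [le_of_eq hxT.1, le_of_eq hxT.2]
    by_cases hz0c : z 0 = c
    · by_cases hz1n : ‖z 1‖ = 1
      · -- case (ii): on the circle, off C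
        obtain ⟨ε2, hε2, hball2⟩ := Metric.isOpen_iff.1 hCcl.isOpen_compl z hzC
        set ε' : ℝ := min ε2 1 with hε'def
        have hε'pos : 0 < ε' := lt_min hε2 one_pos
        have hε'1 : ε' ≤ 1 := min_le_right _ _
        have hCdist : ∀ x ∈ C, ε' ≤ ‖x 1 - z 1‖ := by
          intro x hx
          by_contra hcon
          push_neg at hcon
          have hε'ε2 : ε' ≤ ε2 := min_le_left _ _
          have hxball : x ∈ Metric.ball z ε2 := by
            rw [Metric.mem_ball]
            refine (dist_pi_lt_iff hε2).2 (fun i => ?_)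
            fin_cases i
            · show dist (x 0) (z 0) < ε2
              rw [dist_eq_norm, (hCsub hx).2, hz0c, sub_self, norm_zero]
              exact hε2
            · show dist (x 1) (z 1) < ε2
              rw [dist_eq_norm]
              linarith
          exact (hball2 hxball) hx
        set θ : ℝ := Real.sqrt (1 - ε' ^ 2 / 4) with hθdef
        have hθsq : θ ^ 2 = 1 - ε' ^ 2 / 4 := Real.sq_sqrt (by nlinarith)
        have hθ0 : 0 ≤ θ := Real.sqrt_nonneg _
        have hθ1 : θ < 1 := by nlinarith [hε'pos]
        set φ : MvPolynomial (Fin 2) ℂ :=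
          MvPolynomial.C (1/2 : ℂ) * (1 + MvPolynomial.C ((starRingEnd ℂ) (z 1)) * MvPolynomial.X 1)
          with hφdef
        have hevalφ : ∀ x : Fin 2 → ℂ, MvPolynomial.eval x φ
            = (1/2 : ℂ) * (1 + (starRingEnd ℂ) (z 1) * x 1) := by
          intro x
          simp [hφdef]
        refine lemmaA (φ := φ) hKcomp hCcomp hz hθ0 hθ1 ?_ ?_ ?_
        · intro x hx
          rw [hevalφ, norm_mul]
          have h1 : ‖1 + (starRingEnd ℂ) (z 1) * x 1‖ ≤ 2 := by
            calc ‖1 + (starRingEnd ℂ) (z 1) * x 1‖ ≤ ‖(1:ℂ)‖ + ‖(starRingEnd ℂ) (z 1) * x 1‖ :=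
                  norm_add_le _ _
              _ ≤ 2 := by
                  rw [norm_one, norm_mul, RCLike.norm_conj, hz1n, (hKΓ hx).2]
                  norm_num
          rw [show ‖(1/2 : ℂ)‖ = 1/2 by norm_num]
          linarith
        · intro x hx
          rw [hevalφ, norm_mul, show ‖(1/2 : ℂ)‖ = 1/2 by norm_num]
          have hid := norm_one_add_conj_mul hz1n (hCT hx).2
          have hd := hCdist x hx
          have hnn : 0 ≤ ‖1 + (starRingEnd ℂ) (z 1) * x 1‖ := norm_nonneg _
          have hsq : (1/2 * ‖1 + (starRingEnd ℂ) (z 1) * x 1‖) ^ 2 ≤ 1 - ε' ^ 2 / 4 := by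
            have h2 : ε' ^ 2 ≤ ‖x 1 - z 1‖ ^ 2 := pow_le_pow_left₀ hε'pos.le hd 2
            nlinarith
          nlinarith [hθ0, Real.sqrt_nonneg (1 - ε' ^ 2 / 4)]
        · rw [hevalφ, conj_mul_self hz1n]
          norm_num
      · -- case (iii): interior of the circle fiber
        have hz1lt : ‖z 1‖ < 1 := lt_of_le_of_ne (coordBound 1) hz1n
        set B : Set ℂ := {ζ : ℂ | ‖ζ‖ = 1 ∧ ρ ≤ ‖ζ - μ 1‖} with hBdef
        have hBclosed : IsClosed B := by
          refine IsClosed.inter (isClosed_eq continuous_norm continuous_const) ?_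
          exact isClosed_le continuous_const ((continuous_id.sub continuous_const).norm)
        have hBcomp : IsCompact B := by
          refine Metric.isCompact_of_isClosed_isBounded hBclosed ?_
          apply (Metric.isBounded_closedBall (x := (0:ℂ)) (r := 1)).subset
          intro ζ hζ
          rw [Metric.mem_closedBall, dist_zero_right]
          exact le_of_eq hζ.1
        obtain ⟨g, hg1, hg2⟩ := exists_peak hBcomp (fun ζ h => h.1) hl1 hρ hρ1
          (fun ζ h => h.2) hz1lt
        obtain ⟨M, hM⟩ := (isCompact_sphere (0:ℂ) 1).exists_bound_of_continuousOn
          (g.continuous.continuousOn (s := Metric.sphere 0 1))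
        set M' : ℝ := max M 1 with hM'def
        have hM'pos : 0 < M' := lt_of_lt_of_le one_pos (le_max_right _ _)
        set γ : ℝ := Real.sqrt (1 - ρ ^ 2 / 4) with hγdef
        have hγsq : γ ^ 2 = 1 - ρ ^ 2 / 4 := Real.sq_sqrt (by nlinarith)
        have hγ0 : 0 ≤ γ := Real.sqrt_nonneg _
        have hγ1 : γ < 1 := by nlinarith
        obtain ⟨N, hN⟩ := exists_pow_lt_of_lt_one (show (0:ℝ) < 1 / M' by positivity) hγ1
        set φ : MvPolynomial (Fin 2) ℂ := emb g *
          (MvPolynomial.C (1/2 : ℂ) * (1 + MvPolynomial.C ((starRingEnd ℂ) c) * MvPolynomial.X 0)) ^ N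
          with hφdef
        have hevalφ : ∀ x : Fin 2 → ℂ, MvPolynomial.eval x φ
            = g.eval (x 1) * ((1/2 : ℂ) * (1 + (starRingEnd ℂ) c * x 0)) ^ N := by
          intro x
          simp [hφdef, eval_emb]
        have hu : ∀ x0 : ℂ, ‖x0‖ = 1 → ‖(1/2 : ℂ) * (1 + (starRingEnd ℂ) c * x0)‖ ≤ 1 := by
          intro x0 hx0
          rw [norm_mul, show ‖(1/2 : ℂ)‖ = 1/2 by norm_num]
          have : ‖1 + (starRingEnd ℂ) c * x0‖ ≤ 2 := by
            calc ‖1 + (starRingEnd ℂ) c * x0‖ ≤ ‖(1:ℂ)‖ + ‖(starRingEnd ℂ) c * x0‖ := norm_add_le _ _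
              _ ≤ 2 := by rw [norm_one, norm_mul, RCLike.norm_conj, hc, hx0]; norm_num
          linarith
        have huγ : ∀ x0 : ℂ, ‖x0‖ = 1 → ρ ≤ ‖x0 - c‖ →
            ‖(1/2 : ℂ) * (1 + (starRingEnd ℂ) c * x0)‖ ≤ γ := by
          intro x0 hx0 hx0c
          rw [norm_mul, show ‖(1/2 : ℂ)‖ = 1/2 by norm_num]
          have hid := norm_one_add_conj_mul hc hx0
          have h2 : ρ ^ 2 ≤ ‖x0 - c‖ ^ 2 := pow_le_pow_left₀ hρ.le hx0c 2
          have hnn : 0 ≤ ‖1 + (starRingEnd ℂ) c * x0‖ := norm_nonneg _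
          nlinarith
        refine lemmaA (φ := φ) hKcomp hCcomp hz (θ := 1/2) (by norm_num) (by norm_num) ?_ ?_ ?_
        · intro x hx
          rw [hevalφ, norm_mul, norm_pow]
          have hx0 : ‖x 0‖ = 1 := (hKΓ hx).1
          have hx1 : ‖x 1‖ = 1 := (hKΓ hx).2
          rcases gap x (Or.inl hx) with hg0 | hg1'
          · -- x 0 far from c
            have hMx : ‖g.eval (x 1)‖ ≤ M' := by
              refine le_trans (hM (x 1) ?_) (le_max_left _ _)
              rw [mem_sphere_iff_norm, sub_zero]
              exact hx1
            have huu := huγ (x 0) hx0 hg0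
            have hpow : ‖(1/2 : ℂ) * (1 + (starRingEnd ℂ) c * x 0)‖ ^ N ≤ γ ^ N :=
              pow_le_pow_left₀ (norm_nonneg _) huu N
            calc ‖g.eval (x 1)‖ * ‖(1/2 : ℂ) * (1 + (starRingEnd ℂ) c * x 0)‖ ^ N
                ≤ M' * γ ^ N := mul_le_mul hMx hpow (by positivity) hM'pos.le
              _ ≤ M' * (1 / M') := by nlinarith
              _ = 1 := by field_simp
          · -- x 1 in B
            have hx1B : x 1 ∈ B := ⟨hx1, hg1'⟩
            have h1 : ‖g.eval (x 1)‖ ≤ 1/2 := hg2 (x 1) hx1B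
            have h2 : ‖(1/2 : ℂ) * (1 + (starRingEnd ℂ) c * x 0)‖ ^ N ≤ 1 :=
              pow_le_one₀ (norm_nonneg _) (hu (x 0) hx0)
            nlinarith [norm_nonneg (g.eval (x 1)),
              pow_nonneg (norm_nonneg ((1/2 : ℂ) * (1 + (starRingEnd ℂ) c * x 0))) N]
        · intro x hx
          rw [hevalφ, norm_mul, norm_pow]
          have hx0c : x 0 = c := (hCsub hx).2
          have hx1 : ‖x 1‖ = 1 := (hCT hx).2
          have hx1B : x 1 ∈ B := by
            refine ⟨hx1, ?_⟩
            rcases gap x (Or.inr hx) with h | h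
            · rw [hx0c] at h; simp at h; linarith
            · exact h
          have hueq : ‖(1/2 : ℂ) * (1 + (starRingEnd ℂ) c * x 0)‖ = 1 := by
            rw [hx0c, conj_mul_self hc]
            norm_num
          rw [hueq, one_pow, mul_one]
          exact hg2 (x 1) hx1B
        · rw [hevalφ, hz0c, conj_mul_self hc, hg1]
          norm_num
    · -- case (i): z 0 ≠ c
      by_cases hzK : z ∈ polyHull K
      · exact hzK
      · exfalso
        apply hzK
        rw [polyHull, Set.mem_setOf_eq] at hzK
        push_neg at hzK
        obtain ⟨p₀, hp₀⟩ := hzK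
        set M₀ : ℝ := sSup ((fun w => ‖MvPolynomial.eval w p₀‖) '' K) with hM₀def
        set a : ℝ := ‖MvPolynomial.eval z p₀‖ with hadef
        have hM₀0 : 0 ≤ M₀ := Real.sSup_nonneg (by rintro t ⟨w, _, rfl⟩; positivity)
        have ha : M₀ < a := hp₀
        have hapos : 0 < a := lt_of_le_of_lt hM₀0 ha
        set d : ℝ := ‖z 0 - c‖ with hddef
        have hdpos : 0 < d := by
          rw [hddef, norm_pos_iff]
          exact sub_ne_zero.2 hz0c
        have hr1 : M₀ / a < 1 := (div_lt_one hapos).2 ha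
        have hr0 : 0 ≤ M₀ / a := by positivity
        obtain ⟨n, hn⟩ := exists_pow_lt_of_lt_one (show (0:ℝ) < d / 2 by positivity) hr1
        set α : ℂ := ((1 / (d * a ^ n) : ℝ) : ℂ) with hαdef
        set φ : MvPolynomial (Fin 2) ℂ :=
          MvPolynomial.C α * p₀ ^ n * (MvPolynomial.X 0 - MvPolynomial.C c) with hφdef
        have hevalφ : ∀ x : Fin 2 → ℂ, MvPolynomial.eval x φ
            = α * (MvPolynomial.eval x p₀) ^ n * (x 0 - c) := by
          intro x
          simp [hφdef]
        have hαnorm : ‖α‖ = 1 / (d * a ^ n) := by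
          rw [hαdef, Complex.norm_real, Real.norm_eq_abs, abs_of_pos (by positivity)]
        refine lemmaA (φ := φ) hKcomp hCcomp hz (θ := 1/2) (by norm_num) (by norm_num) ?_ ?_ ?_
        · intro x hx
          rw [hevalφ, norm_mul, norm_mul, norm_pow, hαnorm]
          have hp : ‖MvPolynomial.eval x p₀‖ ≤ M₀ :=
            le_csSup (bddAboveIm hKcomp p₀) (Set.mem_image_of_mem _ hx)
          have hx0 : ‖x 0 - c‖ ≤ 2 := by
            calc ‖x 0 - c‖ ≤ ‖x 0‖ + ‖c‖ := norm_sub_le _ _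
              _ ≤ 2 := by rw [(hKΓ hx).1, hc]; norm_num
          have hpn : ‖MvPolynomial.eval x p₀‖ ^ n ≤ M₀ ^ n :=
            pow_le_pow_left₀ (norm_nonneg _) hp n
          have key : M₀ ^ n * 2 ≤ d * a ^ n := by
            have h5 : (M₀ / a) ^ n < d / 2 := hn
            rw [div_pow] at h5
            rw [div_lt_div_iff₀ (by positivity) (by norm_num)] at h5
            linarith
          rw [div_mul_eq_mul_div, div_mul_eq_mul_div, one_mul]
          rw [div_le_one (by positivity)]
          calc ‖MvPolynomial.eval x p₀‖ ^ n * ‖x 0 - c‖ ≤ M₀ ^ n * 2 := by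
                refine mul_le_mul hpn hx0 (norm_nonneg _) (by positivity)
            _ ≤ d * a ^ n := key
        · intro x hx
          rw [hevalφ, (hCsub hx).2]
          simp
        · rw [hevalφ, norm_mul, norm_mul, norm_pow, hαnorm, ← hadef, ← hddef]
          rw [div_mul_eq_mul_div, div_mul_eq_mul_div, one_mul]
          rw [le_div_iff₀ (by positivity)]
          ring_nf
          nlinarith [pow_pos hapos n, hdpos]
  · -- easy direction
    intro z hz
    rcases hz with hz | hz
    · exact hull_mono hKCcomp Set.subset_union_left hz
    · exact subset_hull hKCcomp (Or.inr hz)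
end

section
/- Let X be a compact Hausdorff space, let E ⊆ X be closed, and let B be a closed subalgebra of C(E,ℂ) containing the constant functions. Let A = { f ∈ C(X,ℂ) : f|_E ∈ B }. Suppose: S is a collection of functions in A such that the closure in C(E,ℂ) of the subalgebra generated by the constants and { f|_E : f ∈ S } equals B; G is a collection of real-valued continuous functions on X such that the closure in C(X,ℂ) of the subalgebra generated by the constants and G equals C(X,ℂ); and ρ ∈ C(X,ℝ) is a function whose zero set is exactly E. Then the closure in C(X,ℂ) of the subalgebra generated by the constants together with S, ρ, and { ρ·g : g ∈ G } equals A. -/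
/-- Functional calculus: any continuous real function of `ρ`, coerced to `ℂ`, lies in the
closure of any subalgebra containing `ρC`. -/
lemma funcalc {X : Type*} [TopologicalSpace X] [CompactSpace X]
    (ρ : C(X, ℝ)) (ρC : C(X, ℂ)) (hρC : ∀ x : X, ρC x = (ρ x : ℂ))
    (T : Subalgebra ℂ C(X, ℂ)) (hT : ρC ∈ T)
    (g : C(ℝ, ℝ)) (f : C(X, ℂ)) (hf : ∀ x, f x = (g (ρ x) : ℂ)) :
    f ∈ closure (T : Set C(X, ℂ)) := by
  set a : ℝ := ‖ρ‖ with ha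
  have hmem : ∀ x : X, ρ x ∈ Set.Icc (-a) a := by
    intro x
    have := ρ.norm_coe_le_norm x
    rw [Real.norm_eq_abs, abs_le] at this
    exact ⟨this.1, this.2⟩
  set gI : C(Set.Icc (-a) a, ℝ) := g.restrict (Set.Icc (-a) a) with hgI
  have hgImem : gI ∈ closure ((polynomialFunctions (Set.Icc (-a) a) : Set C(Set.Icc (-a) a, ℝ))) := by
    have := polynomialFunctions_closure_eq_top (-a) a
    have h2 : gI ∈ (polynomialFunctions (Set.Icc (-a) a)).topologicalClosure := by
      rw [this]; trivial
    rwa [← Subalgebra.topologicalClosure_coe]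
  rw [Metric.mem_closure_iff]
  intro ε hε
  rw [Metric.mem_closure_iff] at hgImem
  obtain ⟨p', hp'mem, hp'⟩ := hgImem ε hε
  rw [SetLike.mem_coe, polynomialFunctions, Subalgebra.mem_map] at hp'mem
  obtain ⟨q, -, hq⟩ := hp'mem
  refine ⟨Polynomial.aeval ρC (q.map (algebraMap ℝ ℂ)), ?_, ?_⟩
  · exact SetLike.mem_coe.2 <|
      (Algebra.adjoin_le (Set.singleton_subset_iff.2 hT))
        (Polynomial.aeval_mem_adjoin_singleton ℂ ρC)
  · have key : ∀ x : X, dist (f x) ((Polynomial.aeval ρC (q.map (algebraMap ℝ ℂ))) x)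
        ≤ dist gI p' := by
      intro x
      have hFx : (Polynomial.aeval ρC (q.map (algebraMap ℝ ℂ))) x = ((q.eval (ρ x) : ℝ) : ℂ) := by
        rw [Polynomial.aeval_continuousMap_apply, hρC, Polynomial.eval_map,
          show ((ρ x : ℝ) : ℂ) = algebraMap ℝ ℂ (ρ x) from rfl,
          Polynomial.eval₂_at_apply]
        norm_cast
      have hdist : dist ((g (ρ x) : ℝ) : ℂ) ((q.eval (ρ x) : ℝ) : ℂ)
          = dist (g (ρ x)) (q.eval (ρ x)) := by
        rw [dist_eq_norm, dist_eq_norm, ← Complex.ofReal_sub, Complex.norm_real]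
      rw [hFx, hf x, hdist]
      have := ContinuousMap.dist_apply_le_dist (f := gI) (g := p') ⟨ρ x, hmem x⟩
      have hp'x : p' ⟨ρ x, hmem x⟩ = q.eval (ρ x) := by
        rw [← hq]; rfl
      have hgIx : gI ⟨ρ x, hmem x⟩ = g (ρ x) := rfl
      rwa [hp'x, hgIx] at this
    calc dist f (Polynomial.aeval ρC (q.map (algebraMap ℝ ℂ)))
        ≤ dist gI p' := (ContinuousMap.dist_le dist_nonneg).2 key
      _ < ε := hp'

lemma bound1 (n t : ℝ) (hn : 0 < n) : |t| / (1 + n * t ^ 2) ≤ 1 / (2 * Real.sqrt n) := by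
  have hs : 0 < Real.sqrt n := Real.sqrt_pos.2 hn
  have hden : (0:ℝ) < 1 + n * t ^ 2 := by nlinarith [sq_nonneg t]
  rw [div_le_div_iff₀ hden (by positivity)]
  nlinarith [sq_nonneg (1 - Real.sqrt n * |t|), Real.sq_sqrt hn.le, sq_abs t]

set_option maxHeartbeats 2000000 in
theorem stmt16 {X : Type*} [TopologicalSpace X] [CompactSpace X] [T2Space X]
    (E : Set X) (hE : IsClosed E)
    (B : Subalgebra ℂ C(E, ℂ)) (hBcl : IsClosed (B : Set C(E, ℂ)))
    (A : Set C(X, ℂ)) (hA : A = {f : C(X, ℂ) | f.restrict E ∈ B})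
    (S : Set C(X, ℂ)) (hSA : S ⊆ A)
    (hSgen : closure ((Algebra.adjoin ℂ ((fun f : C(X, ℂ) => f.restrict E) '' S) :
        Subalgebra ℂ C(E, ℂ)) : Set C(E, ℂ)) = (B : Set C(E, ℂ)))
    (G : Set C(X, ℂ)) (hGreal : ∀ g ∈ G, ∀ x : X, ∃ r : ℝ, g x = (r : ℂ))
    (hGgen : closure ((Algebra.adjoin ℂ G : Subalgebra ℂ C(X, ℂ)) : Set C(X, ℂ)) = Set.univ)
    (ρ : C(X, ℝ)) (hρ : ∀ x : X, ρ x = 0 ↔ x ∈ E)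
    (ρC : C(X, ℂ)) (hρC : ∀ x : X, ρC x = (ρ x : ℂ)) :
    closure ((Algebra.adjoin ℂ (S ∪ {ρC} ∪ (fun g => ρC * g) '' G) :
      Subalgebra ℂ C(X, ℂ)) : Set C(X, ℂ)) = A := by
  haveI : CompactSpace E := isCompact_iff_compactSpace.mp hE.isCompact
  set gens : Set C(X, ℂ) := S ∪ {ρC} ∪ (fun g => ρC * g) '' G with hgens
  set M : Subalgebra ℂ C(X, ℂ) := Algebra.adjoin ℂ gens with hM
  set Mt : Subalgebra ℂ C(X, ℂ) := M.topologicalClosure with hMt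
  have hMtcoe : (Mt : Set C(X, ℂ)) = closure (M : Set C(X, ℂ)) :=
    Subalgebra.topologicalClosure_coe M
  have hMtclosed : IsClosed (Mt : Set C(X, ℂ)) := Subalgebra.isClosed_topologicalClosure M
  set ι : C(E, X) := ⟨Subtype.val, continuous_subtype_val⟩ with hι
  set r : C(X, ℂ) →ₐ[ℂ] C(E, ℂ) := ContinuousMap.compRightAlgHom ℂ ℂ ι with hr
  have hrf : ∀ f : C(X, ℂ), r f = f.restrict E := fun f => rfl
  have hrρC : r ρC = 0 := by
    ext x
    show ρC (ι x) = 0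
    have hx : (ι x : X) ∈ E := x.2
    rw [hρC]
    exact_mod_cast (hρ _).mpr hx
  -- forward inclusion
  have hAset : A = r ⁻¹' (B : Set C(E, ℂ)) := by
    rw [hA]; ext f
    simp only [Set.mem_setOf_eq, Set.mem_preimage, SetLike.mem_coe, hrf]
  have hAclosed : IsClosed A := by
    rw [hAset]
    exact hBcl.preimage (ContinuousMap.compRightAlgHom_continuous ℂ ℂ ι)
  have hMA : (M : Set C(X, ℂ)) ⊆ A := by
    intro f hf
    rw [hAset]
    have hle : M ≤ B.comap r := by
      rw [hM]
      apply Algebra.adjoin_le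
      intro x hx
      rcases hx with (hx | hx) | ⟨g, hg, rfl⟩
      · have := hSA hx
        rw [hA] at this
        rw [SetLike.mem_coe, Subalgebra.mem_comap, hrf]
        exact this
      · rw [Set.mem_singleton_iff] at hx
        subst hx
        rw [SetLike.mem_coe, Subalgebra.mem_comap, hrρC]
        exact zero_mem B
      · rw [SetLike.mem_coe, Subalgebra.mem_comap, map_mul, hrρC, zero_mul]
        exact zero_mem B
    exact hle hf
  have hsub : closure (M : Set C(X, ℂ)) ⊆ A := closure_minimal hMA hAclosed
  -- reverse inclusion
  have hρCMt : ρC ∈ Mt := M.le_topologicalClosure (Algebra.subset_adjoin (Or.inl (Or.inr rfl)))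
  have hfc : ∀ (g : C(ℝ, ℝ)) (f : C(X, ℂ)), (∀ x, f x = (g (ρ x) : ℂ)) → f ∈ Mt := by
    intro g f hf
    have := funcalc ρ ρC hρC Mt hρCMt g f hf
    rwa [hMtclosed.closure_eq] at this
  have hΓ : ∀ n : ℝ, 0 ≤ n → ∃ Γ : C(X, ℂ), Γ ∈ Mt ∧
      ∀ x, Γ x = ((n * ρ x / (1 + n * (ρ x) ^ 2) : ℝ) : ℂ) := by
    intro n hn
    have hden : ∀ t : ℝ, 0 < 1 + n * t ^ 2 := fun t => by
      nlinarith [sq_nonneg t, mul_nonneg hn (sq_nonneg t)]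
    have hcont : Continuous fun t : ℝ => n * t / (1 + n * t ^ 2) :=
      Continuous.div (by fun_prop) (by fun_prop) fun t => (hden t).ne'
    set g : C(ℝ, ℝ) := ⟨fun t => n * t / (1 + n * t ^ 2), hcont⟩ with hg
    refine ⟨⟨fun x => ((g (ρ x) : ℝ) : ℂ),
      Complex.continuous_ofReal.comp (g.continuous.comp ρ.continuous)⟩, ?_, fun x => rfl⟩
    exact hfc g _ fun x => rfl
  -- multiplicative stability of {h | ρC * h ∈ Mt}
  have K1 : ∀ h1 h2 : C(X, ℂ), ρC * h1 ∈ Mt → ρC * h2 ∈ Mt → ρC * (h1 * h2) ∈ Mt := by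
    intro h1 h2 m1 m2
    have hcl : (ρC * (h1 * h2) : C(X, ℂ)) ∈ closure (Mt : Set C(X, ℂ)) := by
      rw [Metric.mem_closure_iff]
      intro ε hε
      set Cst : ℝ := ‖h1‖ * ‖h2‖ with hCst
      have hC : 0 ≤ Cst := mul_nonneg (norm_nonneg _) (norm_nonneg _)
      obtain ⟨n, hn0, hnb⟩ : ∃ n : ℝ, 0 < n ∧ Cst / (2 * Real.sqrt n) < ε := by
        refine ⟨(Cst / ε) ^ 2 + 1, by positivity, ?_⟩
        have hsq : Cst / ε < Real.sqrt ((Cst / ε) ^ 2 + 1) :=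
          Real.lt_sqrt_of_sq_lt (by linarith)
        have hs : 0 < Real.sqrt ((Cst / ε) ^ 2 + 1) :=
          lt_of_le_of_lt (by positivity) hsq
        rw [div_lt_iff₀ (by positivity)]
        have := (div_lt_iff₀ hε).1 hsq
        nlinarith
      obtain ⟨Γ, hΓMt, hΓx⟩ := hΓ n hn0.le
      refine ⟨Γ * ((ρC * h1) * (ρC * h2)),
        SetLike.mem_coe.2 (mul_mem hΓMt (mul_mem m1 m2)), ?_⟩
      have key : ∀ x, dist ((ρC * (h1 * h2)) x) ((Γ * ((ρC * h1) * (ρC * h2))) x)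
          ≤ Cst / (2 * Real.sqrt n) := by
        intro x
        set t : ℝ := ρ x with ht
        have hden : (0:ℝ) < 1 + n * t ^ 2 := by nlinarith [sq_nonneg t]
        have hval : (ρC * (h1 * h2)) x - (Γ * ((ρC * h1) * (ρC * h2))) x
            = ((t - (n * t / (1 + n * t ^ 2)) * t ^ 2 : ℝ) : ℂ) * (h1 x * h2 x) := by
          simp only [ContinuousMap.mul_apply, hΓx, hρC, ← ht]
          push_cast
          ring
        have hsimp : t - (n * t / (1 + n * t ^ 2)) * t ^ 2 = t / (1 + n * t ^ 2) := by
          field_simp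
          ring
        rw [dist_eq_norm, hval, hsimp]
        rw [norm_mul, Complex.norm_real, Real.norm_eq_abs, abs_div,
          abs_of_pos hden]
        have hb1 : |t| / (1 + n * t ^ 2) ≤ 1 / (2 * Real.sqrt n) := bound1 n t hn0
        have hb2 : ‖h1 x * h2 x‖ ≤ Cst := by
          rw [norm_mul, hCst]
          exact mul_le_mul (h1.norm_coe_le_norm x) (h2.norm_coe_le_norm x)
            (norm_nonneg _) (norm_nonneg _)
        calc |t| / (1 + n * t ^ 2) * ‖h1 x * h2 x‖
            ≤ 1 / (2 * Real.sqrt n) * Cst :=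
              mul_le_mul hb1 hb2 (norm_nonneg _) (by positivity)
          _ = Cst / (2 * Real.sqrt n) := by ring
      exact lt_of_le_of_lt ((ContinuousMap.dist_le (by positivity)).2 key) hnb
    rwa [hMtclosed.closure_eq] at hcl
  -- ρC * h ∈ Mt for all h
  have K2 : ∀ h : C(X, ℂ), ρC * h ∈ Mt := by
    have hWclosed : IsClosed {h : C(X, ℂ) | ρC * h ∈ Mt} :=
      hMtclosed.preimage (continuous_mul_left ρC)
    have hW : closure ((Algebra.adjoin ℂ G : Subalgebra ℂ C(X, ℂ)) : Set C(X, ℂ))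
        ⊆ {h : C(X, ℂ) | ρC * h ∈ Mt} := by
      apply closure_minimal _ hWclosed
      intro h hh
      simp only [SetLike.mem_coe] at hh
      induction hh using Algebra.adjoin_induction with
      | mem g hg =>
        exact M.le_topologicalClosure (Algebra.subset_adjoin (Or.inr ⟨g, hg, rfl⟩))
      | algebraMap c => exact mul_mem hρCMt (Subalgebra.algebraMap_mem Mt c)
      | add x y hx hy ihx ihy =>
        show ρC * (x + y) ∈ Mt
        rw [mul_add]; exact add_mem ihx ihy
      | mul x y hx hy ihx ihy => exact K1 x y ihx ihy
    intro h
    exact hW (by rw [hGgen]; trivial)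
  -- reverse inclusion
  have hrev : A ⊆ closure (M : Set C(X, ℂ)) := by
    intro f hf
    rw [← hMtcoe, ← hMtclosed.closure_eq, Metric.mem_closure_iff]
    intro ε hε
    set ε' : ℝ := ε / 4 with hε'def
    have hε'pos : 0 < ε' := by positivity
    have hfB : f.restrict E ∈ closure ((Algebra.adjoin ℂ
        ((fun f : C(X, ℂ) => f.restrict E) '' S) : Subalgebra ℂ C(E, ℂ)) : Set C(E, ℂ)) := by
      rw [hSgen]
      rw [hA] at hf
      exact hf
    rw [Metric.mem_closure_iff] at hfB
    obtain ⟨q, hqmem, hq⟩ := hfB ε' hε'pos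
    have himg : (fun f : C(X, ℂ) => f.restrict E) '' S = ⇑r '' S :=
      Set.image_congr fun s _ => (hrf s).symm
    rw [SetLike.mem_coe, himg, ← AlgHom.map_adjoin, Subalgebra.mem_map] at hqmem
    obtain ⟨Q, hQmem, hQ⟩ := hqmem
    have hQMt : Q ∈ Mt :=
      M.le_topologicalClosure (Algebra.adjoin_mono (fun s hs => Or.inl (Or.inl hs)) hQmem)
    set h : C(X, ℂ) := f - Q with hh
    have hhE : ∀ x, x ∈ E → ‖h x‖ ≤ ε' := by
      intro x hx
      have hd := ContinuousMap.dist_apply_le_dist (f := f.restrict E) (g := q) ⟨x, hx⟩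
      have hqx : q ⟨x, hx⟩ = Q x := by rw [← hQ]; rfl
      have hfx : (f.restrict E) ⟨x, hx⟩ = f x := rfl
      rw [hqx, hfx] at hd
      have : ‖h x‖ = dist (f x) (Q x) := by
        rw [hh, dist_eq_norm]; rfl
      rw [this]
      exact le_trans hd hq.le
    obtain ⟨n, hn0, hbound⟩ : ∃ n : ℝ, 0 ≤ n ∧
        ∀ x, ‖h x‖ / (1 + n * (ρ x) ^ 2) ≤ 2 * ε' := by
      by_cases hU : ∀ x, ‖h x‖ < 2 * ε'
      · refine ⟨0, le_refl 0, fun x => ?_⟩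
        simpa using (hU x).le
      · push_neg at hU
        obtain ⟨x₀, hx₀⟩ := hU
        set K : Set X := {x | 2 * ε' ≤ ‖h x‖} with hK
        have hKclosed : IsClosed K := isClosed_le continuous_const h.continuous.norm
        have hKcompact : IsCompact K := hKclosed.isCompact
        have hKne : K.Nonempty := ⟨x₀, hx₀⟩
        obtain ⟨z, hzK, hzmin⟩ := hKcompact.exists_isMinOn hKne
          ((ρ.continuous.pow 2).continuousOn)
        have hzE : z ∉ E := by
          intro hzE
          have := hhE z hzE
          have h2 : 2 * ε' ≤ ‖h z‖ := hzK
          linarith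
        have hρz : ρ z ≠ 0 := fun h0 => hzE ((hρ z).mp h0)
        set δsq : ℝ := (ρ z) ^ 2 with hδsq
        have hδpos : 0 < δsq := by positivity
        refine ⟨‖h‖ / (2 * ε' * δsq), by positivity, fun x => ?_⟩
        by_cases hxK : x ∈ K
        · have hmin : δsq ≤ (ρ x) ^ 2 := hzmin hxK
          have hnδ : ‖h‖ / (2 * ε' * δsq) * δsq = ‖h‖ / (2 * ε') := by
            field_simp
          have hd1 : 1 + ‖h‖ / (2 * ε') ≤ 1 + ‖h‖ / (2 * ε' * δsq) * (ρ x) ^ 2 := by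
            rw [← hnδ]
            have : ‖h‖ / (2 * ε' * δsq) * δsq ≤ ‖h‖ / (2 * ε' * δsq) * (ρ x) ^ 2 :=
              mul_le_mul_of_nonneg_left hmin (by positivity)
            linarith
          have hdpos : (0:ℝ) < 1 + ‖h‖ / (2 * ε') := by positivity
          calc ‖h x‖ / (1 + ‖h‖ / (2 * ε' * δsq) * (ρ x) ^ 2)
              ≤ ‖h‖ / (1 + ‖h‖ / (2 * ε')) :=
                div_le_div₀ (norm_nonneg _) (h.norm_coe_le_norm x) hdpos hd1
            _ ≤ 2 * ε' := by
                rw [div_le_iff₀ hdpos]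
                have hexp : 2 * ε' * (1 + ‖h‖ / (2 * ε')) = 2 * ε' + ‖h‖ := by
                  field_simp
                rw [hexp]
                linarith
        · have hxU : ‖h x‖ < 2 * ε' := by
            by_contra hc
            exact hxK (le_of_not_gt hc)
          have hd1 : (1:ℝ) ≤ 1 + ‖h‖ / (2 * ε' * δsq) * (ρ x) ^ 2 := by
            have : 0 ≤ ‖h‖ / (2 * ε' * δsq) * (ρ x) ^ 2 := by positivity
            linarith
          calc ‖h x‖ / (1 + ‖h‖ / (2 * ε' * δsq) * (ρ x) ^ 2)
              ≤ ‖h x‖ / 1 := div_le_div₀ (norm_nonneg _) (le_refl _) one_pos hd1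
            _ ≤ 2 * ε' := by rw [div_one]; exact hxU.le
    obtain ⟨Γ, hΓMt, hΓx⟩ := hΓ n hn0
    refine ⟨Q + ρC * (Γ * h), SetLike.mem_coe.2 (add_mem hQMt (K2 (Γ * h))), ?_⟩
    have key : ∀ x, dist (f x) ((Q + ρC * (Γ * h)) x) ≤ 2 * ε' := by
      intro x
      set t : ℝ := ρ x with ht
      have hden : (0:ℝ) < 1 + n * t ^ 2 := by
        nlinarith [sq_nonneg t, mul_nonneg hn0 (sq_nonneg t)]
      have hval : f x - (Q + ρC * (Γ * h)) x
          = ((1 - (n * t / (1 + n * t ^ 2)) * t : ℝ) : ℂ) * h x := by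
        have hhx : h x = f x - Q x := rfl
        simp only [ContinuousMap.add_apply, ContinuousMap.mul_apply, hΓx, hρC, ← ht, hhx]
        push_cast
        ring
      have hsimp : 1 - (n * t / (1 + n * t ^ 2)) * t = 1 / (1 + n * t ^ 2) := by
        field_simp
        ring
      rw [dist_eq_norm, hval, hsimp, norm_mul, Complex.norm_real, Real.norm_eq_abs,
        abs_div, abs_of_pos hden, abs_one]
      have := hbound x
      rw [← ht] at this
      calc 1 / (1 + n * t ^ 2) * ‖h x‖ = ‖h x‖ / (1 + n * t ^ 2) := by ring
        _ ≤ 2 * ε' := this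
    calc dist f (Q + ρC * (Γ * h)) ≤ 2 * ε' := (ContinuousMap.dist_le (by positivity)).2 key
      _ < ε := by rw [hε'def]; linarith
  exact Set.Subset.antisymm hsub hrev
end
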